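/- Let B ⊆ ℤ × ℤ be a finite nonempty set, let S ⊆ ℕ be a finite nonempty set, and let ε > 0. Suppose that |π_{-1}(B)| > max_{j ∈ S} |π_j(B)|^{1+ε}. Then for every M > 0 there exists a finite nonempty set B' ⊆ ℤ × ℤ such that |π_{-1}(B')| > M · max_{j ∈ S} |π_j(B')|^{1+ε}. -/

import Mathlib

/-- The projection `π_j(A) = {x + j·y : (x,y) ∈ A}` of a finite set `A ⊆ ℤ × ℤ`. -/
def proj (j : ℤ) (A : Finset (ℤ × ℤ)) : Finset ℤ :=
  A.image fun q => q.1 + j * q.2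

lemma proj_comb (j T : ℤ) (B : Finset (ℤ × ℤ)) :
    proj j ((B ×ˢ B).image fun pq => (pq.1.1 + T * pq.2.1, pq.1.2 + T * pq.2.2))
      = ((proj j B) ×ˢ (proj j B)).image fun ab => ab.1 + T * ab.2 := by
  ext z
  simp only [proj, Finset.image_image, Finset.mem_image, Finset.mem_product]
  constructor
  · rintro ⟨pq, ⟨hp, hq⟩, rfl⟩
    exact ⟨(pq.1.1 + j * pq.1.2, pq.2.1 + j * pq.2.2),
      ⟨⟨pq.1, hp, rfl⟩, ⟨pq.2, hq, rfl⟩⟩, by simp; ring⟩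
  · rintro ⟨⟨a, b⟩, ⟨⟨p, hp, rfl⟩, ⟨q, hq, rfl⟩⟩, rfl⟩
    exact ⟨(p, q), ⟨hp, hq⟩, by simp; ring⟩

lemma double (B : Finset (ℤ × ℤ)) (hB : B.Nonempty) :
    ∃ B' : Finset (ℤ × ℤ), B'.Nonempty ∧
      (proj (-1) B).card ^ 2 ≤ (proj (-1) B').card ∧
      ∀ j : ℤ, (proj j B').card ≤ (proj j B).card ^ 2 := by
  set K : ℕ := (proj (-1) B).sup (fun s => s.natAbs) with hK
  set T : ℤ := 2 * (K : ℤ) + 1 with hT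
  refine ⟨(B ×ˢ B).image fun pq => (pq.1.1 + T * pq.2.1, pq.1.2 + T * pq.2.2),
    (hB.product hB).image _, ?_, ?_⟩
  · rw [proj_comb]
    have hinj : Set.InjOn (fun ab : ℤ × ℤ => ab.1 + T * ab.2)
        ↑((proj (-1) B) ×ˢ (proj (-1) B)) := by
      rintro ⟨a, b⟩ hab ⟨a', b'⟩ hab' h
      simp only [Finset.coe_product, Set.mem_prod, Finset.mem_coe] at hab hab'
      have ha : |a| ≤ (K : ℤ) := by
        have := Finset.le_sup (f := fun s : ℤ => s.natAbs) hab.1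
        rw [Int.abs_eq_natAbs]; exact_mod_cast this
      have ha' : |a'| ≤ (K : ℤ) := by
        have := Finset.le_sup (f := fun s : ℤ => s.natAbs) hab'.1
        rw [Int.abs_eq_natAbs]; exact_mod_cast this
      simp only at h
      have hb : b = b' := by
        by_contra hne
        have h1 : a - a' = T * (b' - b) := by linarith
        have h2 : |a - a'| = |T| * |b' - b| := by rw [h1, abs_mul]
        have h3 : (1 : ℤ) ≤ |b' - b| := Int.one_le_abs (sub_ne_zero.mpr (Ne.symm hne))
        have hTpos : (0 : ℤ) < T := by positivity
        have h4 : |T| = T := abs_of_pos hTpos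
        have h5 : T * 1 ≤ |T| * |b' - b| := by
          rw [h4]; exact mul_le_mul_of_nonneg_left h3 hTpos.le
        have h6 : |a - a'| ≤ |a| + |a'| := abs_sub a a'
        omega
      have : a = a' := by
        subst hb; linarith
      simp [this, hb]
    rw [Finset.card_image_of_injOn hinj, Finset.card_product, sq]
  · intro j
    rw [proj_comb]
    calc (((proj j B) ×ˢ (proj j B)).image fun ab => ab.1 + T * ab.2).card
        ≤ ((proj j B) ×ˢ (proj j B)).card := Finset.card_image_le
      _ = (proj j B).card ^ 2 := by rw [Finset.card_product, sq]

lemma iter (B : Finset (ℤ × ℤ)) (hB : B.Nonempty) (n : ℕ) :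
    ∃ B' : Finset (ℤ × ℤ), B'.Nonempty ∧
      (proj (-1) B).card ^ (2 ^ n) ≤ (proj (-1) B').card ∧
      ∀ j : ℤ, (proj j B').card ≤ (proj j B).card ^ (2 ^ n) := by
  induction n with
  | zero => exact ⟨B, hB, by simp, fun j => by simp⟩
  | succ n ih =>
    obtain ⟨C, hC, h1, h2⟩ := ih
    obtain ⟨D, hD, g1, g2⟩ := double C hC
    refine ⟨D, hD, ?_, ?_⟩
    · calc (proj (-1) B).card ^ 2 ^ (n + 1) = ((proj (-1) B).card ^ 2 ^ n) ^ 2 := by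
            rw [← pow_mul, pow_succ]
        _ ≤ (proj (-1) C).card ^ 2 := Nat.pow_le_pow_left h1 2
        _ ≤ _ := g1
    · intro j
      calc (proj j D).card ≤ (proj j C).card ^ 2 := g2 j
        _ ≤ ((proj j B).card ^ 2 ^ n) ^ 2 := Nat.pow_le_pow_left (h2 j) 2
        _ = _ := by rw [← pow_mul, pow_succ]

/-- Amplification lemma: if `B ⊆ ℤ × ℤ` is finite and nonempty, `S ⊆ ℕ` is finite and nonempty,
`ε > 0`, and `|π_{-1}(B)| > |π_j(B)|^{1+ε}` for every `j ∈ S` (i.e. `|π_{-1}(B)|` exceeds the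
max over `S`), then for every `M > 0` there is a finite nonempty `B' ⊆ ℤ × ℤ` with
`|π_{-1}(B')| > M · |π_j(B')|^{1+ε}` for every `j ∈ S`. -/
theorem stmt19 (B : Finset (ℤ × ℤ)) (hBne : B.Nonempty)
    (S : Finset ℕ) (hSne : S.Nonempty) (ε : ℝ) (hε : 0 < ε)
    (hB : ∀ j ∈ S, ((proj (j : ℤ) B).card : ℝ) ^ (1 + ε) < (proj (-1) B).card) :
    ∀ M : ℝ, 0 < M → ∃ B' : Finset (ℤ × ℤ), B'.Nonempty ∧
      ∀ j ∈ S, M * ((proj (j : ℤ) B').card : ℝ) ^ (1 + ε) < (proj (-1) B').card := by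
  intro M hM
  set c : ℝ := ((proj (-1) B).card : ℝ) with hc
  have hdpos : ∀ j ∈ S, (0 : ℝ) < (((proj (j : ℤ) B).card : ℝ)) ^ (1 + ε) := by
    intro j hj
    have : (proj (j : ℤ) B).Nonempty := hBne.image _
    have : 0 < (proj (j : ℤ) B).card := Finset.card_pos.mpr this
    exact Real.rpow_pos_of_pos (by exact_mod_cast this) _
  set f : ℕ → ℝ := fun j => c / (((proj (j : ℤ) B).card : ℝ)) ^ (1 + ε) with hf
  set r : ℝ := S.inf' hSne f with hr
  have hr1 : 1 < r := by
    rw [hr, Finset.lt_inf'_iff]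
    intro j hj
    exact (one_lt_div (hdpos j hj)).mpr (hB j hj)
  obtain ⟨n, hn⟩ := pow_unbounded_of_one_lt M hr1
  have hn2 : M < r ^ (2 ^ n) := by
    refine hn.trans_le (pow_le_pow_right₀ hr1.le ?_)
    exact (Nat.lt_two_pow_self (n := n)).le
  obtain ⟨B', hB'ne, hlow, hup⟩ := iter B hBne n
  refine ⟨B', hB'ne, fun j hj => ?_⟩
  have hd0 : (0 : ℝ) ≤ ((proj (j : ℤ) B).card : ℝ) := Nat.cast_nonneg _
  -- bound the projection of B'
  have step1 : (((proj (j : ℤ) B').card : ℝ)) ^ (1 + ε)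
      ≤ ((((proj (j : ℤ) B).card : ℝ)) ^ (1 + ε)) ^ (2 ^ n) := by
    have h1 : (((proj (j : ℤ) B').card : ℝ)) ^ (1 + ε)
        ≤ ((((proj (j : ℤ) B).card : ℝ) ^ (2 ^ n))) ^ (1 + ε) := by
      apply Real.rpow_le_rpow (Nat.cast_nonneg _) _ (by linarith)
      exact_mod_cast hup (j : ℤ)
    refine h1.trans_eq ?_
    rw [← Real.rpow_natCast ((proj (j : ℤ) B).card : ℝ) (2 ^ n), ← Real.rpow_mul hd0,
      mul_comm, Real.rpow_mul hd0, Real.rpow_natCast]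
  have hrle : r ≤ f j := Finset.inf'_le f hj
  have hDpos : (0 : ℝ) < ((((proj (j : ℤ) B).card : ℝ)) ^ (1 + ε)) ^ (2 ^ n) :=
    pow_pos (hdpos j hj) _
  have key : M * ((((proj (j : ℤ) B).card : ℝ)) ^ (1 + ε)) ^ (2 ^ n) < c ^ (2 ^ n) := by
    have h2 : r ^ (2 ^ n) ≤ (f j) ^ (2 ^ n) :=
      pow_le_pow_left₀ (by linarith) hrle _
    have h3 : M < (f j) ^ (2 ^ n) := hn2.trans_le h2
    have h4 : (f j) ^ (2 ^ n) = c ^ (2 ^ n) / ((((proj (j : ℤ) B).card : ℝ)) ^ (1 + ε)) ^ (2 ^ n) := by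
      rw [hf]; simp only [div_pow]
    rw [h4] at h3
    exact (lt_div_iff₀ hDpos).mp h3
  have hclow : c ^ (2 ^ n) ≤ ((proj (-1) B').card : ℝ) := by
    rw [hc]
    exact_mod_cast hlow
  calc M * (((proj (j : ℤ) B').card : ℝ)) ^ (1 + ε)
      ≤ M * ((((proj (j : ℤ) B).card : ℝ)) ^ (1 + ε)) ^ (2 ^ n) :=
        mul_le_mul_of_nonneg_left step1 hM.le
    _ < c ^ (2 ^ n) := key
    _ ≤ _ := hclow
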